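/- Let p be an odd prime and F_q a finite field of characteristic p with q elements, with field trace Tr : F_q → ZMod p. Then for every r ∈ F_q with r ≠ 1 and r ≠ −1, (2/q) · Σ_{s ∈ F_q} |cos²(2π·(Tr s).val/p) − cos²(2π·(Tr(r·s)).val/p)| ≥ 1/2. -/

import Mathlib

open scoped BigOperators

open Real Complex

noncomputable def ec (p : ℕ) (m : ℤ) : ℂ := Complex.exp (2 * Real.pi * Complex.I * m / p)

lemma ec_add (p : ℕ) (m n : ℤ) : ec p (m + n) = ec p m * ec p n := by
  rw [ec, ec, ec, ← Complex.exp_add]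
  congr 1
  push_cast
  ring

lemma ec_congr (p : ℕ) [NeZero p] {m n : ℤ} (h : m ≡ n [ZMOD p]) : ec p m = ec p n := by
  obtain ⟨k, hk⟩ : (p:ℤ) ∣ n - m := Int.ModEq.dvd h
  have hn : n = m + p * k := by linarith
  rw [hn, ec_add]
  have hpk : ec p ((p:ℤ) * k) = 1 := by
    rw [ec]
    have hp : (p:ℂ) ≠ 0 := by exact_mod_cast (NeZero.ne p)
    have harg : 2 * (Real.pi:ℂ) * Complex.I * (((p:ℤ) * k : ℤ) : ℂ) / p = (k:ℤ) * (2 * Real.pi * Complex.I) := by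
      push_cast
      field_simp
    rw [harg]
    exact Complex.exp_int_mul_two_pi_mul_I k
  rw [hpk, mul_one]

lemma ec_re (p : ℕ) (m : ℤ) : (ec p m).re = Real.cos (2 * Real.pi * m / p) := by
  have : ec p m = Complex.exp (((2 * Real.pi * m / p : ℝ) : ℂ) * Complex.I) := by
    rw [ec]; congr 1; push_cast; ring
  rw [this, Complex.exp_ofReal_mul_I_re]

lemma ec_ne_one (p : ℕ) [NeZero p] {m : ℤ} (hm : ¬ (p:ℤ) ∣ m) : ec p m ≠ 1 := by
  intro h
  rw [ec, Complex.exp_eq_one_iff] at h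
  obtain ⟨n, hn⟩ := h
  apply hm
  refine ⟨n, ?_⟩
  have hp : (p:ℂ) ≠ 0 := by exact_mod_cast (NeZero.ne p)
  have hπ : (Real.pi : ℂ) ≠ 0 := by exact_mod_cast Real.pi_ne_zero
  have hI := Complex.I_ne_zero
  have h2 : (2 * (Real.pi:ℂ) * Complex.I) ≠ 0 :=
    mul_ne_zero (mul_ne_zero two_ne_zero hπ) hI
  have : (m:ℂ) = (p:ℂ) * n := by
    field_simp at hn
    exact mul_left_cancel₀ h2 (by linear_combination (2 * (Real.pi:ℂ) * Complex.I) * hn)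
  exact_mod_cast this

noncomputable def ee (p : ℕ) (x : ZMod p) : ℂ := ec p (x.val : ℤ)

lemma ee_of_int (p : ℕ) [NeZero p] (m : ℤ) (x : ZMod p) (h : (m : ZMod p) = x) :
    ec p m = ee p x := by
  apply ec_congr
  apply (ZMod.intCast_eq_intCast_iff _ _ _).mp
  rw [h]
  push_cast [ZMod.natCast_val, ZMod.cast_id]
  rfl

lemma ee_add (p : ℕ) [NeZero p] (x y : ZMod p) : ee p (x + y) = ee p x * ee p y := by
  have h := ee_of_int p ((x.val : ℤ) + (y.val : ℤ)) (x + y)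
    (by push_cast [ZMod.natCast_val, ZMod.cast_id]; ring)
  rw [← h, ec_add]
  rfl

lemma ee_ne_one (p : ℕ) [NeZero p] {x : ZMod p} (hx : x ≠ 0) : ee p x ≠ 1 := by
  apply ec_ne_one
  intro hdvd
  have hv : x.val ≠ 0 := fun h => hx ((ZMod.val_eq_zero x).mp h)
  have hd : p ∣ x.val := Int.natCast_dvd_natCast.mp hdvd
  have hlt := ZMod.val_lt x
  have := Nat.le_of_dvd (Nat.pos_of_ne_zero hv) hd
  omega

lemma trace_nondeg (p : ℕ) [Fact p.Prime] (F : Type*) [Field F] [Fintype F]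
    [CharP F p] [Algebra (ZMod p) F] {a : F} (ha : a ≠ 0) :
    ∃ b : F, Algebra.trace (ZMod p) F (a * b) ≠ 0 := by
  have h : ringChar F = p := ringChar.eq F p
  subst h
  exact FiniteField.trace_to_zmod_nondegenerate F ha

lemma sum_ee_eq_zero (p : ℕ) [Fact p.Prime] (F : Type*) [Field F] [Fintype F]
    [CharP F p] [Algebra (ZMod p) F] {c : F} (hc : c ≠ 0) :
    ∑ s : F, ee p (Algebra.trace (ZMod p) F (c * s)) = 0 := by
  obtain ⟨b, hb⟩ := trace_nondeg p F hc
  set T := ∑ s : F, ee p (Algebra.trace (ZMod p) F (c * s)) with hT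
  have key : ee p (Algebra.trace (ZMod p) F (c * b)) * T = T := by
    rw [hT, Finset.mul_sum]
    calc ∑ s : F, ee p (Algebra.trace (ZMod p) F (c * b)) * ee p (Algebra.trace (ZMod p) F (c * s))
        = ∑ s : F, ee p (Algebra.trace (ZMod p) F (c * (b + s))) :=
          Finset.sum_congr rfl fun s _ => by rw [← ee_add, ← map_add, ← mul_add]
      _ = T := Equiv.sum_comp (Equiv.addLeft b) (fun s => ee p (Algebra.trace (ZMod p) F (c * s)))
  have hne : ee p (Algebra.trace (ZMod p) F (c * b)) - 1 ≠ 0 := sub_ne_zero.mpr (ee_ne_one p hb)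
  have h0 : (ee p (Algebra.trace (ZMod p) F (c * b)) - 1) * T = 0 := by
    rw [sub_mul, one_mul, key, sub_self]
  exact (mul_eq_zero.mp h0).resolve_left hne

lemma ee_zero (p : ℕ) [NeZero p] : ee p 0 = 1 := by
  simp [ee, ec, ZMod.val_zero]


/-- For `p` an odd prime, `F_q` of characteristic `p`, and `r ∈ F_q` with
`r ≠ ±1`, `(2/q) Σ_s |cos²(2π Tr(s)/p) − cos²(2π Tr(rs)/p)| ≥ 1/2`. -/
theorem stmt_16 (p : ℕ) [Fact p.Prime] (hp : p ≠ 2) (F : Type*) [Field F] [Fintype F]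
    [CharP F p] [Algebra (ZMod p) F] (r : F) (hr1 : r ≠ 1) (hr2 : r ≠ -1) :
    (1 : ℝ) / 2 ≤ (2 / (Fintype.card F : ℝ)) * ∑ s : F,
      |(Real.cos (2 * Real.pi * ((Algebra.trace (ZMod p) F s).val : ℝ) / p)) ^ 2
        - (Real.cos (2 * Real.pi * ((Algebra.trace (ZMod p) F (r * s)).val : ℝ) / p)) ^ 2| := by
  classical
  haveI : NeZero p := ⟨(Fact.out : p.Prime).ne_zero⟩
  set Tr := Algebra.trace (ZMod p) F with hTrdef
  have h2F : (2:F) ≠ 0 := by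
    intro h
    have h2 : ((2:ℕ):F) = 0 := by exact_mod_cast h
    have hdvd := (CharP.cast_eq_zero_iff F p 2).mp h2
    exact hp ((Nat.prime_dvd_prime_iff_eq Fact.out Nat.prime_two).mp hdvd)
  have h1r : (1:F) + r ≠ 0 := fun h => hr2 (by linear_combination h)
  have h1r' : (1:F) - r ≠ 0 := fun h => hr1 (by linear_combination -h)
  have h4 : (4:F) ≠ 0 := by
    have h44 : (4:F) = 2*2 := by norm_num
    rw [h44]; exact mul_ne_zero h2F h2F
  have hc3 : (2:F) + 2*r ≠ 0 := by
    have he : (2:F) + 2*r = 2*(1+r) := by ring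
    rw [he]; exact mul_ne_zero h2F h1r
  have hc4 : (2:F) - 2*r ≠ 0 := by
    have he : (2:F) - 2*r = 2*(1-r) := by ring
    rw [he]; exact mul_ne_zero h2F h1r'
  have Tr2 : ∀ y : F, Tr ((2:F) * y) = 2 * Tr y := fun y => by
    rw [two_mul, map_add, ← two_mul]
  have Tr4 : ∀ y : F, Tr ((4:F) * y) = 4 * Tr y := fun y => by
    have h : (4:F) * y = 2 * (2 * y) := by ring
    rw [h, Tr2, Tr2]; ring
  set A : F → ℝ := fun s => 2 * Real.pi * ((Tr s).val : ℝ) / p with hA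
  set B : F → ℝ := fun s => 2 * Real.pi * ((Tr (r*s)).val : ℝ) / p with hB
  set D : F → ℝ := fun s => Real.cos (2 * A s) - Real.cos (2 * B s) with hD
  -- bridges
  have br1 : ∀ s : F, Real.cos (2 * (2 * A s)) = (ee p (Tr ((4:F)*s))).re := by
    intro s
    have hcast : (((4 * (Tr s).val : ℤ)) : ZMod p) = Tr ((4:F)*s) := by
      rw [Tr4]
      push_cast [ZMod.natCast_val, ZMod.cast_id]
      ring
    have hAngle : 2 * (2 * A s) = 2 * Real.pi * (((4 * (Tr s).val : ℤ)):ℝ) / p := by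
      simp only [hA]; push_cast; ring
    rw [hAngle, ← ee_of_int p _ _ hcast, ec_re]
  have br2 : ∀ s : F, Real.cos (2 * (2 * B s)) = (ee p (Tr (((4:F)*r)*s))).re := by
    intro s
    have hcast : (((4 * (Tr (r*s)).val : ℤ)) : ZMod p) = Tr (((4:F)*r)*s) := by
      rw [mul_assoc, Tr4]
      push_cast [ZMod.natCast_val, ZMod.cast_id]
      ring
    have hAngle : 2 * (2 * B s) = 2 * Real.pi * (((4 * (Tr (r*s)).val : ℤ)):ℝ) / p := by
      simp only [hB]; push_cast; ring
    rw [hAngle, ← ee_of_int p _ _ hcast, ec_re]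
  have br3 : ∀ s : F, Real.cos (2 * A s + 2 * B s) = (ee p (Tr (((2:F)+2*r)*s))).re := by
    intro s
    have hcast : (((2 * (Tr s).val + 2 * (Tr (r*s)).val : ℤ)) : ZMod p)
        = Tr (((2:F)+2*r)*s) := by
      have he : ((2:F)+2*r)*s = 2*s + 2*(r*s) := by ring
      rw [he, map_add, Tr2, Tr2]
      push_cast [ZMod.natCast_val, ZMod.cast_id]
      ring
    have hAngle : 2 * A s + 2 * B s
        = 2 * Real.pi * (((2 * (Tr s).val + 2 * (Tr (r*s)).val : ℤ)):ℝ) / p := by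
      simp only [hA, hB]; push_cast; ring
    rw [hAngle, ← ee_of_int p _ _ hcast, ec_re]
  have br4 : ∀ s : F, Real.cos (2 * A s - 2 * B s) = (ee p (Tr (((2:F)-2*r)*s))).re := by
    intro s
    have hcast : (((2 * (Tr s).val - 2 * (Tr (r*s)).val : ℤ)) : ZMod p)
        = Tr (((2:F)-2*r)*s) := by
      have he : ((2:F)-2*r)*s = 2*s - 2*(r*s) := by ring
      rw [he, map_sub, Tr2, Tr2]
      push_cast [ZMod.natCast_val, ZMod.cast_id]
      ring
    have hAngle : 2 * A s - 2 * B s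
        = 2 * Real.pi * (((2 * (Tr s).val - 2 * (Tr (r*s)).val : ℤ)):ℝ) / p := by
      simp only [hA, hB]; push_cast; ring
    rw [hAngle, ← ee_of_int p _ _ hcast, ec_re]
  -- pointwise identity for D^2
  have P : ∀ s : F, D s ^ 2 = 1 + (ee p (Tr ((4:F)*s))).re/2 + (ee p (Tr (((4:F)*r)*s))).re/2
      - (ee p (Tr (((2:F)+2*r)*s))).re - (ee p (Tr (((2:F)-2*r)*s))).re := by
    intro s
    have hx := Real.cos_sq (2 * A s)
    have hy := Real.cos_sq (2 * B s)
    have hxy : Real.cos (2*A s) * Real.cos (2*B s)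
        = (Real.cos (2*A s + 2*B s) + Real.cos (2*A s - 2*B s))/2 := by
      rw [Real.cos_add, Real.cos_sub]; ring
    have hstart : D s ^ 2 = Real.cos (2*A s)^2 + Real.cos (2*B s)^2
        - 2*(Real.cos (2*A s) * Real.cos (2*B s)) := by
      simp only [hD]; ring
    rw [hstart, hx, hy, hxy, br1 s, br2 s, br3 s, br4 s]
    ring
  -- sum of squares
  have hsum : ∑ s : F, D s ^ 2 = (Fintype.card F : ℝ)
      + (∑ s : F, ee p (Tr ((4:F)*s))).re/2
      + (∑ s : F, ee p (Tr (((4:F)*r)*s))).re/2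
      - (∑ s : F, ee p (Tr (((2:F)+2*r)*s))).re
      - (∑ s : F, ee p (Tr (((2:F)-2*r)*s))).re := by
    calc ∑ s : F, D s ^ 2
        = ∑ s : F, (1 + (ee p (Tr ((4:F)*s))).re/2 + (ee p (Tr (((4:F)*r)*s))).re/2
          - (ee p (Tr (((2:F)+2*r)*s))).re - (ee p (Tr (((2:F)-2*r)*s))).re) :=
          Finset.sum_congr rfl fun s _ => P s
      _ = _ := by
          simp only [Finset.sum_add_distrib, Finset.sum_sub_distrib, ← Finset.sum_div,
            Finset.sum_const, Finset.card_univ, nsmul_eq_mul, mul_one, Complex.re_sum]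
  have k1 : ∑ s : F, ee p (Tr ((4:F)*s)) = 0 := sum_ee_eq_zero p F h4
  have k3 : ∑ s : F, ee p (Tr (((2:F)+2*r)*s)) = 0 := sum_ee_eq_zero p F hc3
  have k4 : ∑ s : F, ee p (Tr (((2:F)-2*r)*s)) = 0 := sum_ee_eq_zero p F hc4
  have k2 : 0 ≤ (∑ s : F, ee p (Tr (((4:F)*r)*s))).re := by
    rcases eq_or_ne r 0 with h0 | h0
    · subst h0
      simp [mul_zero, zero_mul, map_zero, hTrdef, ee_zero, Complex.one_re]
    · rw [sum_ee_eq_zero p F (mul_ne_zero h4 h0)]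
      simp
  have hDsq : (Fintype.card F : ℝ) ≤ ∑ s : F, D s ^ 2 := by
    rw [hsum, k1, k3, k4]
    simp only [Complex.zero_re, zero_div, add_zero, sub_zero]
    linarith
  -- pointwise bounds
  have habs : ∀ s : F, |Real.cos (A s)^2 - Real.cos (B s)^2| = |D s| / 2 := by
    intro s
    have h : Real.cos (A s)^2 - Real.cos (B s)^2 = D s / 2 := by
      rw [Real.cos_sq (A s), Real.cos_sq (B s)]
      simp only [hD]; ring
    rw [h, abs_div]
    norm_num
  have hD2 : ∀ s : F, D s ^ 2 ≤ 2 * |D s| := by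
    intro s
    have h1 : |D s| ≤ 2 := by
      have hb1 := Real.neg_one_le_cos (2 * A s)
      have hb2 := Real.cos_le_one (2 * A s)
      have hb3 := Real.neg_one_le_cos (2 * B s)
      have hb4 := Real.cos_le_one (2 * B s)
      apply abs_le.mpr
      constructor <;> simp only [hD] <;> nlinarith
    calc D s ^ 2 = |D s| ^ 2 := (_root_.sq_abs _).symm
      _ = |D s| * |D s| := pow_two _
      _ ≤ 2 * |D s| := mul_le_mul_of_nonneg_right h1 (abs_nonneg _)
  have hs2 : (Fintype.card F : ℝ) ≤ 2 * ∑ s : F, |D s| := by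
    calc (Fintype.card F : ℝ) ≤ ∑ s : F, D s ^ 2 := hDsq
      _ ≤ ∑ s : F, 2 * |D s| := Finset.sum_le_sum fun s _ => hD2 s
      _ = 2 * ∑ s : F, |D s| := by rw [Finset.mul_sum]
  have hs1 : ∑ s : F, |Real.cos (A s)^2 - Real.cos (B s)^2| = (∑ s : F, |D s|)/2 := by
    rw [Finset.sum_div]
    exact Finset.sum_congr rfl fun s _ => habs s
  have hqpos : (0:ℝ) < Fintype.card F := by exact_mod_cast Fintype.card_pos
  have hfinal : (Fintype.card F : ℝ)/4 ≤ (∑ s : F, |D s|)/2 := by linarith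
  calc (1:ℝ)/2 = 2/(Fintype.card F : ℝ) * ((Fintype.card F : ℝ)/4) := by
        field_simp
        norm_num
      _ ≤ 2/(Fintype.card F : ℝ) * ((∑ s : F, |D s|)/2) :=
        mul_le_mul_of_nonneg_left hfinal (by positivity)
      _ = 2/(Fintype.card F : ℝ) * ∑ s : F, |Real.cos (A s)^2 - Real.cos (B s)^2| := by
        rw [hs1]
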